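/- arXiv:1705.08322 — 10 statements merged into one kernel-verified Lean document; each statement's English description precedes it below -/
import Mathlib

section
/- For all natural numbers n, s(n) ≤ 2n. -/
theorem s_le_two_mul (s : ℕ → ℕ)
    (hs0 : s 0 = 0) (hs1 : s 1 = 1) (hs2 : s 2 = 2)
    (hrec1 : ∀ ℓ, 1 ≤ ℓ → ∀ r, 1 ≤ r → r ≤ 2 ^ (ℓ - 1) →
      s (2 ^ ℓ + r) = s (2 ^ (ℓ - 1) + r) + s r)
    (hrec2 : ∀ ℓ, 1 ≤ ℓ → ∀ r, 2 ^ (ℓ - 1) < r → r ≤ 2 ^ ℓ →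
      s (2 ^ ℓ + r) = s (2 ^ (ℓ + 1) - r + 1)) :
    ∀ n, s n ≤ 2 * n := by
  intro n
  induction n using Nat.strong_induction_on with
  | _ n ih =>
    by_cases h0 : n = 0
    · simp [h0, hs0]
    by_cases h1 : n = 1
    · simp [h1, hs1]
    by_cases h2 : n = 2
    · simp [h2, hs2]
    have hn3 : 3 ≤ n := by omega
    set ℓ := Nat.log 2 (n - 1) with hℓdef
    have hne : n - 1 ≠ 0 := by omega
    have hlow : 2 ^ ℓ ≤ n - 1 := Nat.pow_log_le_self 2 hne
    have hhigh : n - 1 < 2 ^ (ℓ + 1) := Nat.lt_pow_succ_log_self (by norm_num) _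
    have hℓ1 : 1 ≤ ℓ := Nat.le_log_of_pow_le (by norm_num) (by omega)
    have hpow : 2 ^ (ℓ - 1) * 2 = 2 ^ ℓ := by
      rw [← pow_succ]; congr 1; omega
    have hpow2 : 2 ^ (ℓ + 1) = 2 ^ ℓ * 2 := by rw [pow_succ]
    set r := n - 2 ^ ℓ with hrdef
    have hr1 : 1 ≤ r := by omega
    have hr2 : r ≤ 2 ^ ℓ := by omega
    have hn : n = 2 ^ ℓ + r := by omega
    have hhalfpos : 0 < 2 ^ (ℓ - 1) := Nat.pow_pos (by norm_num)
    by_cases hc : r ≤ 2 ^ (ℓ - 1)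
    · have heq := hrec1 ℓ hℓ1 r hr1 hc
      have ih1 := ih (2 ^ (ℓ - 1) + r) (by omega)
      have ih2 := ih r (by omega)
      rw [hn, heq]
      omega
    · push_neg at hc
      have heq := hrec2 ℓ hℓ1 r hc hr2
      have hmlt : 2 ^ (ℓ + 1) - r + 1 < n := by omega
      have ih1 := ih (2 ^ (ℓ + 1) - r + 1) hmlt
      rw [hn, heq]
      omega
end

section
/- For all n ≥ 0, A(2^n) = 3^n, where A(N) = Σ_{j=0}^{N} s(j). -/
theorem A_pow_two (s : ℕ → ℕ)
    (hs0 : s 0 = 0) (hs1 : s 1 = 1) (hs2 : s 2 = 2)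
    (hrec1 : ∀ ℓ, 1 ≤ ℓ → ∀ r, 1 ≤ r → r ≤ 2 ^ (ℓ - 1) →
      s (2 ^ ℓ + r) = s (2 ^ (ℓ - 1) + r) + s r)
    (hrec2 : ∀ ℓ, 1 ≤ ℓ → ∀ r, 2 ^ (ℓ - 1) < r → r ≤ 2 ^ ℓ →
      s (2 ^ ℓ + r) = s (2 ^ (ℓ + 1) - r + 1))
    (A : ℕ → ℕ) (hA : ∀ N, A N = ∑ j ∈ Finset.range (N + 1), s j) :
    ∀ n, A (2 ^ n) = 3 ^ n := by
  have key : ∀ n, (∑ j ∈ Finset.range (2 ^ n + 1), s j = 3 ^ n) ∧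
      (∑ r ∈ Finset.range (2 ^ n), s (2 ^ n + r + 1) = 2 * 3 ^ n) := by
    intro n
    induction n with
    | zero =>
      constructor
      · simp [Finset.sum_range_succ, hs0, hs1]
      · simpa using hs2
    | succ n ih =>
      obtain ⟨ihS, ihT⟩ := ih
      have hS' : ∑ r ∈ Finset.range (2 ^ n), s (r + 1) = 3 ^ n := by
        rw [Finset.sum_range_succ' s (2 ^ n), hs0] at ihS
        simpa using ihS
      have hSnew : ∑ j ∈ Finset.range (2 ^ (n + 1) + 1), s j = 3 ^ (n + 1) := by
        have h2 : 2 ^ (n + 1) + 1 = (2 ^ n + 1) + 2 ^ n := by ring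
        rw [h2, Finset.sum_range_add, ihS]
        have : ∀ r ∈ Finset.range (2 ^ n), s (2 ^ n + 1 + r) = s (2 ^ n + r + 1) := by
          intro r _; ring_nf
        rw [Finset.sum_congr rfl this, ihT]; ring
      refine ⟨hSnew, ?_⟩
      have hstep1 : ∑ r ∈ Finset.range (2 ^ n), s (2 ^ (n + 1) + r + 1)
          = 2 * 3 ^ n + 3 ^ n := by
        have hc : ∀ r ∈ Finset.range (2 ^ n),
            s (2 ^ (n + 1) + r + 1) = s (2 ^ n + r + 1) + s (r + 1) := by
          intro r hr
          rw [Finset.mem_range] at hr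
          have h := hrec1 (n + 1) (by omega) (r + 1) (by omega) (by simpa using hr)
          simpa [Nat.add_assoc] using h
        rw [Finset.sum_congr rfl hc, Finset.sum_add_distrib, ihT, hS']
      have hstep2 : ∑ r ∈ Finset.range (2 ^ n), s (2 ^ (n + 1) + (2 ^ n + r) + 1)
          = 2 * 3 ^ n + 3 ^ n := by
        have hc : ∀ r ∈ Finset.range (2 ^ n),
            s (2 ^ (n + 1) + (2 ^ n + r) + 1)
              = s (2 ^ (n + 1) + (2 ^ n - 1 - r) + 1) := by
          intro r hr
          rw [Finset.mem_range] at hr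
          have h := hrec2 (n + 1) (by omega) (2 ^ n + r + 1) (by simp)
            (by have : 2 ^ (n + 1) = 2 ^ n + 2 ^ n := by ring
                omega)
          have harg : 2 ^ (n + 1 + 1) - (2 ^ n + r + 1) + 1
              = 2 ^ (n + 1) + (2 ^ n - 1 - r) + 1 := by
            have h1 : 2 ^ (n + 1 + 1) = 2 ^ n + 2 ^ n + 2 ^ n + 2 ^ n := by ring
            have h2 : 2 ^ (n + 1) = 2 ^ n + 2 ^ n := by ring
            omega
          have harg2 : 2 ^ (n + 1) + (2 ^ n + r) + 1 = 2 ^ (n + 1) + (2 ^ n + r + 1) := by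
            omega
          rw [harg2, h, harg]
        rw [Finset.sum_congr rfl hc]
        have := Finset.sum_range_reflect (fun r => s (2 ^ (n + 1) + r + 1)) (2 ^ n)
        rw [this, hstep1]
      have hsplit : ∑ r ∈ Finset.range (2 ^ (n + 1)), s (2 ^ (n + 1) + r + 1)
          = (∑ r ∈ Finset.range (2 ^ n), s (2 ^ (n + 1) + r + 1))
            + ∑ r ∈ Finset.range (2 ^ n), s (2 ^ (n + 1) + (2 ^ n + r) + 1) := by
        have h2 : 2 ^ (n + 1) = 2 ^ n + 2 ^ n := by ring
        rw [h2, Finset.sum_range_add]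
      rw [hsplit, hstep1, hstep2]; ring
  intro n
  rw [hA, (key n).1]
end

section
/- For all ℓ ≥ 1 and all r with 0 ≤ r ≤ 2^{ℓ-1}, A(2^ℓ + r) = 2·3^{ℓ-1} + A(2^{ℓ-1} + r) + A(r). -/
theorem A_rec_first (s : ℕ → ℕ)
    (hs0 : s 0 = 0) (hs1 : s 1 = 1) (hs2 : s 2 = 2)
    (hrec1 : ∀ ℓ, 1 ≤ ℓ → ∀ r, 1 ≤ r → r ≤ 2 ^ (ℓ - 1) →
      s (2 ^ ℓ + r) = s (2 ^ (ℓ - 1) + r) + s r)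
    (hrec2 : ∀ ℓ, 1 ≤ ℓ → ∀ r, 2 ^ (ℓ - 1) < r → r ≤ 2 ^ ℓ →
      s (2 ^ ℓ + r) = s (2 ^ (ℓ + 1) - r + 1))
    (A : ℕ → ℕ) (hA : ∀ N, A N = ∑ j ∈ Finset.range (N + 1), s j)
    (hApow : ∀ n, A (2 ^ n) = 3 ^ n) :
    ∀ ℓ, 1 ≤ ℓ → ∀ r, r ≤ 2 ^ (ℓ - 1) →
      A (2 ^ ℓ + r) = 2 * 3 ^ (ℓ - 1) + A (2 ^ (ℓ - 1) + r) + A r := by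
  have hstep : ∀ N, A (N + 1) = A N + s (N + 1) := by
    intro N
    rw [hA, hA, Finset.sum_range_succ]
  have hA0 : A 0 = 0 := by rw [hA]; simp [hs0]
  intro ℓ hℓ
  intro r
  induction r with
  | zero =>
    intro _
    simp only [Nat.add_zero, hA0, hApow]
    have : 3 ^ ℓ = 3 ^ (ℓ - 1 + 1) := by rw [Nat.sub_add_cancel hℓ]
    rw [this, pow_succ]
    ring
  | succ r ih =>
    intro hr
    have hr' : r ≤ 2 ^ (ℓ - 1) := Nat.le_of_succ_le hr
    have h1 := hrec1 ℓ hℓ (r + 1) (Nat.succ_le_succ (Nat.zero_le r)) hr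
    rw [show 2 ^ ℓ + (r + 1) = (2 ^ ℓ + r) + 1 by ring, hstep, ih hr',
      show 2 ^ ℓ + r + 1 = 2 ^ ℓ + (r + 1) by ring, h1,
      show 2 ^ (ℓ - 1) + (r + 1) = (2 ^ (ℓ - 1) + r) + 1 by ring, hstep,
      show 2 ^ (ℓ - 1) + r + 1 = 2 ^ (ℓ - 1) + (r + 1) by ring, hstep]
    ring
end

section
/- For all ℓ ≥ 1 and all r with 2^{ℓ-1} < r < 2^ℓ, setting r' = 2^ℓ - r, we have A(2^ℓ + r) = 4·3^ℓ - 2·3^{ℓ-1} - A(2^{ℓ-1} + r') - A(r'). -/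
open Finset

private lemma L1aux (s : ℕ → ℕ)
    (hrec1 : ∀ ℓ, 1 ≤ ℓ → ∀ r, 1 ≤ r → r ≤ 2 ^ (ℓ - 1) →
      s (2 ^ ℓ + r) = s (2 ^ (ℓ - 1) + r) + s r)
    (ℓ : ℕ) (hℓ : 1 ≤ ℓ) (n : ℕ) (hn : n ≤ 2 ^ (ℓ - 1)) :
    ∑ i ∈ range n, s (2 ^ ℓ + 1 + i) =
      ∑ i ∈ range n, s (2 ^ (ℓ - 1) + 1 + i) + ∑ i ∈ range n, s (1 + i) := by
  rw [← Finset.sum_add_distrib]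
  apply Finset.sum_congr rfl
  intro i hi
  simp only [Finset.mem_range] at hi
  have h := hrec1 ℓ hℓ (1 + i) (by omega) (by omega)
  rw [show 2 ^ ℓ + 1 + i = 2 ^ ℓ + (1 + i) by ring, h,
      show 2 ^ (ℓ - 1) + (1 + i) = 2 ^ (ℓ - 1) + 1 + i by ring]

private lemma L2aux (s : ℕ → ℕ)
    (hrec2 : ∀ ℓ, 1 ≤ ℓ → ∀ r, 2 ^ (ℓ - 1) < r → r ≤ 2 ^ ℓ →
      s (2 ^ ℓ + r) = s (2 ^ (ℓ + 1) - r + 1))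
    (ℓ : ℕ) (hℓ : 1 ≤ ℓ) (r : ℕ) (h1 : 2 ^ (ℓ - 1) ≤ r) (h2 : r ≤ 2 ^ ℓ) :
    ∑ i ∈ range (2 ^ ℓ - r), s (2 ^ ℓ + r + 1 + i) =
      ∑ i ∈ range (2 ^ ℓ - r), s (2 ^ ℓ + 1 + i) := by
  rw [← Finset.sum_range_reflect (fun i => s (2 ^ ℓ + 1 + i)) (2 ^ ℓ - r)]
  apply Finset.sum_congr rfl
  intro i hi
  simp only [Finset.mem_range] at hi
  have hp : 2 ^ ℓ = 2 * 2 ^ (ℓ - 1) := by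
    conv_lhs => rw [show ℓ = (ℓ - 1) + 1 by omega]
    ring
  have hpp : 2 ^ (ℓ + 1) = 2 * 2 ^ ℓ := by ring
  have h := hrec2 ℓ hℓ (r + 1 + i) (by omega) (by omega)
  rw [show 2 ^ ℓ + r + 1 + i = 2 ^ ℓ + (r + 1 + i) by ring, h]
  congr 1
  omega

private lemma pow_sums (s : ℕ → ℕ)
    (hs0 : s 0 = 0) (hs1 : s 1 = 1) (hs2 : s 2 = 2)
    (hrec1 : ∀ ℓ, 1 ≤ ℓ → ∀ r, 1 ≤ r → r ≤ 2 ^ (ℓ - 1) →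
      s (2 ^ ℓ + r) = s (2 ^ (ℓ - 1) + r) + s r)
    (hrec2 : ∀ ℓ, 1 ≤ ℓ → ∀ r, 2 ^ (ℓ - 1) < r → r ≤ 2 ^ ℓ →
      s (2 ^ ℓ + r) = s (2 ^ (ℓ + 1) - r + 1)) :
    ∀ ℓ : ℕ, (∑ j ∈ range (2 ^ ℓ + 1), s j = 3 ^ ℓ) ∧
      (∑ i ∈ range (2 ^ ℓ), s (2 ^ ℓ + 1 + i) = 2 * 3 ^ ℓ) := by
  intro ℓ
  induction ℓ with
  | zero => norm_num [Finset.sum_range_succ, hs0, hs1, hs2]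
  | succ m ih =>
    obtain ⟨ihS, ihB⟩ := ih
    -- sum of s(1+i) over range 2^m
    have hY : ∑ i ∈ range (2 ^ m), s (1 + i) = 3 ^ m := by
      have h4 := Finset.sum_range_add s 1 (2 ^ m)
      rw [show 1 + 2 ^ m = 2 ^ m + 1 by ring] at h4
      simp [Finset.sum_range_one, hs0, ihS] at h4
      omega
    have hS : ∑ j ∈ range (2 ^ (m + 1) + 1), s j = 3 ^ (m + 1) := by
      have h := Finset.sum_range_add s (2 ^ m + 1) (2 ^ m)
      rw [show 2 ^ m + 1 + 2 ^ m = 2 ^ (m + 1) + 1 by ring] at h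
      rw [h, ihS]
      rw [show ∑ i ∈ range (2 ^ m), s (2 ^ m + 1 + i) = 2 * 3 ^ m from ihB]
      ring
    refine ⟨hS, ?_⟩
    have hsplit := Finset.sum_range_add (fun i => s (2 ^ (m + 1) + 1 + i)) (2 ^ m) (2 ^ m)
    rw [show 2 ^ m + 2 ^ m = 2 ^ (m + 1) by ring] at hsplit
    have hfirst := L1aux s hrec1 (m + 1) (by omega) (2 ^ m)
      (by simp)
    simp only [Nat.add_sub_cancel] at hfirst
    have hmir := L2aux s hrec2 (m + 1) (by omega) (2 ^ m)
      (by simp [Nat.add_sub_cancel]) (Nat.pow_le_pow_right (by norm_num) (by omega))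
    have hb : 2 ^ (m + 1) - 2 ^ m = 2 ^ m := by
      have : 2 ^ (m + 1) = 2 * 2 ^ m := by ring
      omega
    rw [hb] at hmir
    have hsecond : ∑ i ∈ range (2 ^ m), s (2 ^ (m + 1) + 1 + (2 ^ m + i)) =
        ∑ i ∈ range (2 ^ m), s (2 ^ (m + 1) + 1 + i) := by
      rw [← hmir]
      apply Finset.sum_congr rfl
      intro i _
      congr 1
      ring
    rw [hsplit, hsecond, hfirst, ihB, hY]
    ring

theorem A_rec_second (s : ℕ → ℕ)
    (hs0 : s 0 = 0) (hs1 : s 1 = 1) (hs2 : s 2 = 2)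
    (hrec1 : ∀ ℓ, 1 ≤ ℓ → ∀ r, 1 ≤ r → r ≤ 2 ^ (ℓ - 1) →
      s (2 ^ ℓ + r) = s (2 ^ (ℓ - 1) + r) + s r)
    (hrec2 : ∀ ℓ, 1 ≤ ℓ → ∀ r, 2 ^ (ℓ - 1) < r → r ≤ 2 ^ ℓ →
      s (2 ^ ℓ + r) = s (2 ^ (ℓ + 1) - r + 1))
    (A : ℕ → ℕ) (hA : ∀ N, A N = ∑ j ∈ Finset.range (N + 1), s j) :
    ∀ ℓ, 1 ≤ ℓ → ∀ r, 2 ^ (ℓ - 1) < r → r < 2 ^ ℓ →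
      (A (2 ^ ℓ + r) : ℤ) =
        4 * 3 ^ ℓ - 2 * 3 ^ (ℓ - 1) - A (2 ^ (ℓ - 1) + (2 ^ ℓ - r)) - A (2 ^ ℓ - r) := by
  intro ℓ hℓ r h1 h2
  obtain ⟨m, rfl⟩ : ∃ m, ℓ = m + 1 := ⟨ℓ - 1, by omega⟩
  simp only [Nat.add_sub_cancel] at h1 ⊢
  have hp : 2 ^ (m + 1) = 2 * 2 ^ m := by ring
  set r' : ℕ := 2 ^ (m + 1) - r with hr'
  have hr'1 : 1 ≤ r' := by omega
  have hr'2 : r' < 2 ^ m := by omega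
  obtain ⟨hS1, -⟩ := pow_sums s hs0 hs1 hs2 hrec1 hrec2 (m + 2)
  obtain ⟨hSm, -⟩ := pow_sums s hs0 hs1 hs2 hrec1 hrec2 m
  -- split the full sum up to 2^(m+2)
  have hsplit := Finset.sum_range_add s (2 ^ (m + 1) + r + 1) r'
  have harg : 2 ^ (m + 1) + r + 1 + r' = 2 ^ (m + 2) + 1 := by
    have : 2 ^ (m + 2) = 2 * 2 ^ (m + 1) := by ring
    omega
  rw [harg] at hsplit
  have hmir := L2aux s hrec2 (m + 1) (by omega) r
    (by simp only [Nat.add_sub_cancel]; omega) (by omega)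
  simp only [← hr'] at hmir
  have hmir' : ∑ i ∈ range r', s (2 ^ (m + 1) + r + 1 + i) =
      ∑ i ∈ range r', s (2 ^ (m + 1) + 1 + i) := hmir
  have hhalf := L1aux s hrec1 (m + 1) (by omega) r' (by simp only [Nat.add_sub_cancel]; omega)
  simp only [Nat.add_sub_cancel] at hhalf
  -- A(2^m + r')
  have hX : A (2 ^ m + r') = 3 ^ m + ∑ i ∈ range r', s (2 ^ m + 1 + i) := by
    rw [hA]
    have h3 := Finset.sum_range_add s (2 ^ m + 1) r'
    rw [show 2 ^ m + 1 + r' = 2 ^ m + r' + 1 by ring] at h3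
    rw [h3, hSm]
  -- A(r')
  have hYA : A r' = ∑ i ∈ range r', s (1 + i) := by
    rw [hA]
    have h4 := Finset.sum_range_add s 1 r'
    rw [show 1 + r' = r' + 1 by ring] at h4
    rw [h4, Finset.sum_range_one, hs0, zero_add]
  -- assemble the nat identity
  have key : 3 ^ (m + 2) + 3 ^ m =
      A (2 ^ (m + 1) + r) + A (2 ^ m + r') + A r' := by
    rw [hX, hYA, hA (2 ^ (m + 1) + r)]
    omega
  have h9 : ((3 : ℤ) ^ (m + 2)) = 9 * 3 ^ m := by ring
  have h3 : ((3 : ℤ) ^ (m + 1)) = 3 * 3 ^ m := by ring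
  have keyZ : ((3 : ℤ) ^ (m + 2) + 3 ^ m) =
      (A (2 ^ (m + 1) + r) : ℤ) + A (2 ^ m + r') + A r' := by exact_mod_cast key
  linarith
end

section
/- For all natural numbers n, A(2n) = 3·A(n). -/
theorem A_two_mul (s : ℕ → ℕ)
    (hs0 : s 0 = 0) (hs1 : s 1 = 1) (hs2 : s 2 = 2)
    (hrec1 : ∀ ℓ, 1 ≤ ℓ → ∀ r, 1 ≤ r → r ≤ 2 ^ (ℓ - 1) →
      s (2 ^ ℓ + r) = s (2 ^ (ℓ - 1) + r) + s r)
    (hrec2 : ∀ ℓ, 1 ≤ ℓ → ∀ r, 2 ^ (ℓ - 1) < r → r ≤ 2 ^ ℓ →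
      s (2 ^ ℓ + r) = s (2 ^ (ℓ + 1) - r + 1))
    (A : ℕ → ℕ) (hA : ∀ N, A N = ∑ j ∈ Finset.range (N + 1), s j) :
    ∀ n, A (2 * n) = 3 * A n := by
  have key : ∀ n, s (2 * n + 1) + s (2 * n + 2) = 3 * s (n + 1) := by
    intro n
    induction n using Nat.strong_induction_on with
    | _ n IH =>
      by_cases hn0 : n = 0
      · subst hn0
        show s 1 + s 2 = 3 * s 1
        omega
      by_cases hn1 : n = 1
      · subst hn1
        have h3 : s 3 = s 2 + s 1 := by
          have := hrec1 1 le_rfl 1 le_rfl (by norm_num)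
          norm_num at this
          exact this
        have h4 : s 4 = s 3 := by
          have := hrec2 1 le_rfl 2 (by norm_num) (by norm_num)
          norm_num at this
          exact this
        show s 3 + s 4 = 3 * s 2
        omega
      -- now n ≥ 2
      have hn2 : 2 ≤ n := by omega
      set k := Nat.log 2 n with hk
      have hle : 2 ^ k ≤ n := Nat.pow_log_le_self 2 (by omega)
      have hlt : n < 2 ^ (k + 1) := Nat.lt_pow_succ_log_self (by norm_num) n
      have hk1 : 1 ≤ k := by
        rcases Nat.eq_zero_or_pos k with h | h
        · exfalso; rw [h] at hlt; norm_num at hlt; omega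
        · exact h
      have e1 : 2 ^ (k - 1) * 2 = 2 ^ k := by
        rw [← pow_succ]; congr 1; omega
      have e2 : 2 ^ (k + 1) = 2 ^ k * 2 := by rw [pow_succ]
      have e3 : 2 ^ (k + 2) = 2 ^ (k + 1) * 2 := by rw [pow_succ]
      have hp0 : 1 ≤ 2 ^ (k - 1) := Nat.one_le_two_pow
      -- write n + 1 = 2^k + r
      set r := n + 1 - 2 ^ k with hr
      have hr1 : 1 ≤ r := by omega
      have hr2 : r ≤ 2 ^ k := by omega
      have hnr : n + 1 = 2 ^ k + r := by omega
      by_cases hcase : r ≤ 2 ^ (k - 1)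
      · -- case A1
        have h3 := hrec1 k hk1 r hr1 hcase
        rw [show (2:ℕ) ^ k + r = n + 1 by omega] at h3
        have h1 := hrec1 (k + 1) (by omega) (2 * r - 1) (by omega) (by
          simp only [Nat.add_sub_cancel]; omega)
        simp only [Nat.add_sub_cancel] at h1
        rw [show (2:ℕ) ^ (k + 1) + (2 * r - 1) = 2 * n + 1 by omega] at h1
        have h2 := hrec1 (k + 1) (by omega) (2 * r) (by omega) (by
          simp only [Nat.add_sub_cancel]; omega)
        simp only [Nat.add_sub_cancel] at h2
        rw [show (2:ℕ) ^ (k + 1) + 2 * r = 2 * n + 2 by omega] at h2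
        have IH1 := IH (2 ^ (k - 1) + r - 1) (by omega)
        rw [show 2 * (2 ^ (k - 1) + r - 1) + 1 = 2 ^ k + (2 * r - 1) by omega,
            show 2 * (2 ^ (k - 1) + r - 1) + 2 = 2 ^ k + 2 * r by omega,
            show 2 ^ (k - 1) + r - 1 + 1 = 2 ^ (k - 1) + r by omega] at IH1
        have IH2 := IH (r - 1) (by omega)
        rw [show 2 * (r - 1) + 1 = 2 * r - 1 by omega,
            show 2 * (r - 1) + 2 = 2 * r by omega,
            show r - 1 + 1 = r by omega] at IH2
        omega
      · -- case A2
        push_neg at hcase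
        have h3 := hrec2 k hk1 r hcase hr2
        rw [show (2:ℕ) ^ k + r = n + 1 by omega] at h3
        have h1 := hrec2 (k + 1) (by omega) (2 * r - 1) (by
          simp only [Nat.add_sub_cancel]; omega) (by omega)
        rw [show (2:ℕ) ^ (k + 1) + (2 * r - 1) = 2 * n + 1 by omega] at h1
        have h2 := hrec2 (k + 1) (by omega) (2 * r) (by
          simp only [Nat.add_sub_cancel]; omega) (by omega)
        rw [show (2:ℕ) ^ (k + 1) + 2 * r = 2 * n + 2 by omega] at h2
        have IH3 := IH (2 ^ (k + 1) - r) (by omega)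
        rw [show 2 * (2 ^ (k + 1) - r) + 1 = 2 ^ (k + 1 + 1) - 2 * r + 1 by omega,
            show 2 * (2 ^ (k + 1) - r) + 2 = 2 ^ (k + 1 + 1) - (2 * r - 1) + 1 by omega,
            show 2 ^ (k + 1) - r + 1 = 2 ^ (k + 1) - r + 1 from rfl] at IH3
        omega
  intro n
  induction n with
  | zero => simp [hA, hs0]
  | succ m ih =>
    have h1 : A (2 * (m + 1)) = A (2 * m) + (s (2 * m + 1) + s (2 * m + 2)) := by
      rw [hA, hA, show 2 * (m + 1) + 1 = (2 * m + 1) + 1 + 1 by ring,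
        Finset.sum_range_succ, Finset.sum_range_succ]
      ring
    rw [h1, key m, ih, hA (m + 1), hA m,
      Finset.sum_range_succ (f := s) (n := m + 1)]
    ring
end

section
/- For all ℓ ≥ 1 and all 0 ≤ r < F(ℓ-1), s_F(F(ℓ)+r) ≤ 2^{ℓ+1}. -/
theorem sF_le_pow (F : ℕ → ℕ)
    (hF0 : F 0 = 1) (hF1 : F 1 = 2) (hF : ∀ n, F (n + 2) = F (n + 1) + F n)
    (sF : ℕ → ℕ) (hsF0 : sF 0 = 1) (hsF1 : sF 1 = 2)
    (hrec1 : ∀ ℓ, 1 ≤ ℓ → ∀ r, r < F (ℓ - 2) →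
      sF (F ℓ + r) = sF (F (ℓ - 1) + r) + sF r)
    (hrec2 : ∀ ℓ, 1 ≤ ℓ → ∀ r, F (ℓ - 2) ≤ r → r < F (ℓ - 1) →
      sF (F ℓ + r) = 2 * sF r) :
    ∀ ℓ, 1 ≤ ℓ → ∀ r, r < F (ℓ - 1) → sF (F ℓ + r) ≤ 2 ^ (ℓ + 1) := by
  -- monotonicity of F
  have hmono : ∀ ℓ, F ℓ ≤ F (ℓ + 1) := by
    intro ℓ
    match ℓ with
    | 0 => rw [hF0, hF1]; norm_num
    | n + 1 => rw [hF n]; exact Nat.le_add_right _ _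
  have hsum : ∀ ℓ, F ℓ + F (ℓ - 1) ≤ F (ℓ + 1) := by
    intro ℓ
    match ℓ with
    | 0 => simp [hF0, hF1]
    | n + 1 => rw [hF n]; simp
  -- main auxiliary claim
  have aux : ∀ ℓ, ∀ n, n < F ℓ → sF n ≤ 2 ^ ℓ := by
    intro ℓ
    induction ℓ using Nat.strong_induction_on with
    | _ ℓ ih =>
      match ℓ with
      | 0 =>
        intro n hn
        rw [hF0] at hn
        interval_cases n
        simp [hsF0]
      | 1 =>
        intro n hn
        rw [hF1] at hn
        interval_cases n
        · simp [hsF0]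
        · simp [hsF1]
      | k + 2 =>
        intro n hn
        by_cases hcase : n < F (k + 1)
        · calc sF n ≤ 2 ^ (k + 1) := ih (k + 1) (by omega) n hcase
            _ ≤ 2 ^ (k + 2) := Nat.pow_le_pow_right (by norm_num) (by omega)
        · push_neg at hcase
          set r := n - F (k + 1) with hr
          have hn' : n = F (k + 1) + r := by omega
          have hrlt : r < F k := by
            have := hF k
            omega
          by_cases hc2 : r < F (k + 1 - 2)
          · have heq := hrec1 (k + 1) (by omega) r hc2
            have h1 : (k + 1) - 1 = k := by omega
            rw [h1] at heq
            rw [hn', heq]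
            have hb1 : sF (F k + r) ≤ 2 ^ (k + 1) := by
              apply ih (k + 1) (by omega)
              have : F (k + 1 - 2) ≤ F (k - 1) := by
                rcases Nat.eq_zero_or_pos k with hk | hk
                · subst hk; simp
                · have : k + 1 - 2 = k - 1 := by omega
                  rw [this]
              have h2 : F k + r < F k + F (k - 1) := by omega
              exact lt_of_lt_of_le h2 (by
                have := hsum k
                have : F (k - 1 + 1) ≤ F (k + 1) := by
                  rcases Nat.eq_zero_or_pos k with hk | hk
                  · subst hk; simp
                  · have : k - 1 + 1 = k := by omega
                    rw [this]; exact hmono k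
                have := hsum k
                omega)
            have hb2 : sF r ≤ 2 ^ k := ih k (by omega) r hrlt
            have : (2 : ℕ) ^ (k + 2) = 2 ^ (k + 1) + 2 ^ (k + 1) := by ring
            have h2k : (2:ℕ) ^ k ≤ 2 ^ (k + 1) := Nat.pow_le_pow_right (by norm_num) (by omega)
            omega
          · push_neg at hc2
            have h1 : (k + 1) - 1 = k := by omega
            have heq := hrec2 (k + 1) (by omega) r hc2 (by rw [h1]; exact hrlt)
            rw [hn', heq]
            have hb2 : sF r ≤ 2 ^ k := ih k (by omega) r hrlt
            have : (2:ℕ) ^ (k + 2) = 2 * 2 ^ k * 2 := by ring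
            omega
  intro ℓ hℓ r hr
  apply aux (ℓ + 1)
  have := hsum ℓ
  omega
end

section
/- For all n ≥ 0, A_F(F(n)-1) = B(n), where A_F(n) = Σ_{j=0}^{n} s_F(j) and B satisfies B(0)=1, B(1)=3, B(2)=6 and B(n+3) = 2B(n+2) + B(n+1) - B(n). -/
theorem AF_pred_F_eq_B (F : ℕ → ℕ)
    (hF0 : F 0 = 1) (hF1 : F 1 = 2) (hF : ∀ n, F (n + 2) = F (n + 1) + F n)
    (sF : ℕ → ℕ) (hsF0 : sF 0 = 1) (hsF1 : sF 1 = 2)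
    (hrec1 : ∀ ℓ, 1 ≤ ℓ → ∀ r, r < F (ℓ - 2) →
      sF (F ℓ + r) = sF (F (ℓ - 1) + r) + sF r)
    (hrec2 : ∀ ℓ, 1 ≤ ℓ → ∀ r, F (ℓ - 2) ≤ r → r < F (ℓ - 1) →
      sF (F ℓ + r) = 2 * sF r)
    (AF : ℕ → ℕ) (hAF : ∀ n, AF n = ∑ j ∈ Finset.range (n + 1), sF j)
    (B : ℕ → ℤ) (hB0 : B 0 = 1) (hB1 : B 1 = 3) (hB2 : B 2 = 6)
    (hBrec : ∀ n, B (n + 3) = 2 * B (n + 2) + B (n + 1) - B n) :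
    ∀ n, (AF (F n - 1) : ℤ) = B n := by
  -- S n = sum of sF over [0, F n)
  set S : ℕ → ℕ := fun n => ∑ j ∈ Finset.range (F n), sF j with hS
  -- positivity / monotonicity of F
  have hFpos : ∀ n, 1 ≤ F n := by
    intro n
    induction n using Nat.strong_induction_on with
    | _ n ih =>
      match n with
      | 0 => omega
      | 1 => omega
      | (k+2) =>
        have h1 := ih (k+1) (by omega)
        have h2 := ih k (by omega)
        rw [hF]; omega
  have hFmono : ∀ n, F n ≤ F (n + 1) := by
    intro n
    match n with
    | 0 => rw [hF0, hF1]; omega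
    | (k+1) => rw [hF]; have := hFpos k; omega
  -- key recurrence for S
  have hS3 : ∀ m, S (m + 3) + S m = 2 * S (m + 2) + S (m + 1) := by
    intro m
    obtain ⟨d, hd⟩ : ∃ d, F (m + 1) = F m + d := ⟨F (m+1) - F m, by have := hFmono m; omega⟩
    have e1 : S (m + 3) = S (m + 2)
        + (∑ j ∈ Finset.range (F m), sF (F (m + 2) + j))
        + (∑ j ∈ Finset.range d, sF (F (m + 2) + (F m + j))) := by
      have h3 : F (m + 3) = F (m + 2) + (F m + d) := by rw [hF (m+1), ← hd]
      simp only [hS, h3, Finset.sum_range_add, add_assoc]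
    have e2 : (∑ j ∈ Finset.range (F m), sF (F (m + 2) + j))
        = (∑ j ∈ Finset.range (F m), sF (F (m + 1) + j)) + S m := by
      rw [hS, ← Finset.sum_add_distrib]
      apply Finset.sum_congr rfl
      intro j hj
      have hj' : j < F m := Finset.mem_range.mp hj
      have := hrec1 (m + 2) (by omega) j (by exact hj')
      simpa using this
    have e3 : S (m + 2) = S (m + 1) + ∑ j ∈ Finset.range (F m), sF (F (m + 1) + j) := by
      have h2 : F (m + 2) = F (m + 1) + F m := hF m
      simp only [hS, h2, Finset.sum_range_add]
    have e4 : (∑ j ∈ Finset.range d, sF (F (m + 2) + (F m + j)))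
        = 2 * ∑ j ∈ Finset.range d, sF (F m + j) := by
      rw [Finset.mul_sum]
      apply Finset.sum_congr rfl
      intro j hj
      have hj' : j < d := Finset.mem_range.mp hj
      have := hrec2 (m + 2) (by omega) (F m + j)
        (by show F m ≤ F m + j; omega) (by show F m + j < F (m + 1); omega)
      simpa using this
    have e5 : S (m + 1) = S m + ∑ j ∈ Finset.range d, sF (F m + j) := by
      simp only [hS, hd, Finset.sum_range_add]
    omega
  -- compute sF 2
  have hsF2 : sF 2 = 3 := by
    have := hrec1 1 (by omega) 0 (by simp [hF0])
    simp [hF0, hF1, hsF0, hsF1] at this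
    omega
  -- initial values of S
  have hS0 : S 0 = 1 := by simp [hS, hF0, hsF0]
  have hS1 : S 1 = 3 := by
    show ∑ j ∈ Finset.range (F 1), sF j = 3
    rw [hF1, Finset.sum_range_succ, Finset.sum_range_succ, Finset.sum_range_zero,
      hsF0, hsF1]
  have hS2 : S 2 = 6 := by
    have h2 : F 2 = 3 := by have h := hF 0; norm_num [hF0, hF1] at h; omega
    show ∑ j ∈ Finset.range (F 2), sF j = 6
    rw [h2, Finset.sum_range_succ, Finset.sum_range_succ, Finset.sum_range_succ,
      Finset.sum_range_zero, hsF0, hsF1, hsF2]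
  -- S = B by three-step induction
  have key : ∀ n, ((S n : ℤ) = B n) ∧ ((S (n+1) : ℤ) = B (n+1)) ∧ ((S (n+2) : ℤ) = B (n+2)) := by
    intro n
    induction n with
    | zero => exact ⟨by rw [hS0, hB0]; norm_num, by rw [hS1, hB1]; norm_num,
        by rw [hS2, hB2]; norm_num⟩
    | succ k ih =>
      obtain ⟨i0, i1, i2⟩ := ih
      refine ⟨i1, i2, ?_⟩
      have h := hS3 k
      have hb := hBrec k
      have : (S (k + 3) : ℤ) + (S k : ℤ) = 2 * (S (k + 2) : ℤ) + (S (k + 1) : ℤ) := by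
        exact_mod_cast h
      rw [show k + 1 + 2 = k + 3 from rfl, hb]
      linarith
  intro n
  have hAFn : AF (F n - 1) = S n := by
    rw [hAF, show F n - 1 + 1 = F n from by have := hFpos n; omega]
  rw [hAFn]
  exact (key n).1
end

section
/- For all ℓ ≥ 2 and all r with 0 ≤ r < F(ℓ-2), A_F(F(ℓ)+r) = B(ℓ) - B(ℓ-1) + A_F(F(ℓ-1)+r) + A_F(r). -/
theorem AF_rec_first (F : ℕ → ℕ)
    (hF0 : F 0 = 1) (hF1 : F 1 = 2) (hF : ∀ n, F (n + 2) = F (n + 1) + F n)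
    (sF : ℕ → ℕ) (hsF0 : sF 0 = 1) (hsF1 : sF 1 = 2)
    (hrec1 : ∀ ℓ, 1 ≤ ℓ → ∀ r, r < F (ℓ - 2) →
      sF (F ℓ + r) = sF (F (ℓ - 1) + r) + sF r)
    (hrec2 : ∀ ℓ, 1 ≤ ℓ → ∀ r, F (ℓ - 2) ≤ r → r < F (ℓ - 1) →
      sF (F ℓ + r) = 2 * sF r)
    (AF : ℕ → ℕ) (hAF : ∀ n, AF n = ∑ j ∈ Finset.range (n + 1), sF j)
    (B : ℕ → ℤ) (hB0 : B 0 = 1) (hB1 : B 1 = 3) (hB2 : B 2 = 6)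
    (hBrec : ∀ n, B (n + 3) = 2 * B (n + 2) + B (n + 1) - B n) :
    ∀ ℓ, 2 ≤ ℓ → ∀ r, r < F (ℓ - 2) →
      (AF (F ℓ + r) : ℤ) = B ℓ - B (ℓ - 1) + AF (F (ℓ - 1) + r) + AF r := by
  -- specialized recursions
  have hrec1' : ∀ m r, r < F m → sF (F (m+2) + r) = sF (F (m+1) + r) + sF r := by
    intro m r hr
    have h2 : m + 2 - 2 = m := by omega
    have h1 : m + 2 - 1 = m + 1 := by omega
    have := hrec1 (m+2) (by omega) r (by rw [h2]; exact hr)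
    rwa [h1] at this
  have hrec2' : ∀ m r, F m ≤ r → r < F (m+1) → sF (F (m+2) + r) = 2 * sF r := by
    intro m r ha hb
    have h2 : m + 2 - 2 = m := by omega
    have h1 : m + 2 - 1 = m + 1 := by omega
    exact hrec2 (m+2) (by omega) r (by rw [h2]; exact ha) (by rw [h1]; exact hb)
  have hmono : ∀ m, F m ≤ F (m+1) := by
    intro m
    cases m with
    | zero => rw [hF0, hF1]; omega
    | succ n => rw [hF n]; omega
  set S : ℕ → ℕ := fun k => ∑ j ∈ Finset.range (F k), sF j with hS
  have hsum_split : ∀ a b, ∑ j ∈ Finset.range (a + b), sF j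
      = (∑ j ∈ Finset.range a, sF j) + ∑ i ∈ Finset.range b, sF (a + i) :=
    fun a b => Finset.sum_range_add _ a b
  -- step recurrence for S
  have hstep : ∀ m, S (m+3) + S m = 2 * S (m+2) + S (m+1) := by
    intro m
    obtain ⟨c, hc⟩ : ∃ c, F (m+1) = F m + c := ⟨F (m+1) - F m, by have := hmono m; omega⟩
    set A := ∑ i ∈ Finset.range (F m), sF (F (m+1) + i) with hA
    set D := ∑ i ∈ Finset.range c, sF (F m + i) with hD
    have e2 : S (m+1) = S m + D := by
      show ∑ j ∈ Finset.range (F (m+1)), sF j = _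
      rw [hc, hsum_split]
    have e1 : S (m+2) = S (m+1) + A := by
      show ∑ j ∈ Finset.range (F (m+2)), sF j = _
      rw [hF m, hsum_split]
    have t1 : ∑ i ∈ Finset.range (F m), sF (F (m+2) + i) = A + S m := by
      rw [hA]
      show _ = _ + ∑ j ∈ Finset.range (F m), sF j
      rw [← Finset.sum_add_distrib]
      exact Finset.sum_congr rfl fun i hi => hrec1' m i (Finset.mem_range.mp hi)
    have t2 : ∑ i ∈ Finset.range c, sF (F (m+2) + (F m + i)) = 2 * D := by
      rw [hD, Finset.mul_sum]
      refine Finset.sum_congr rfl fun i hi => ?_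
      exact hrec2' m (F m + i) (Nat.le_add_right _ _)
        (by have := Finset.mem_range.mp hi; omega)
    have e3 : S (m+3) = S (m+2) + ((A + S m) + 2 * D) := by
      show ∑ j ∈ Finset.range (F (m+3)), sF j = _
      rw [hF (m+1), hsum_split]
      have hmm : m + 1 + 1 = m + 2 := rfl
      rw [hmm, hc, Finset.sum_range_add (fun i => sF (F (m+2) + i)) (F m) c, t1, t2]
    omega
  -- base values
  have hs2 : sF 2 = 3 := by
    have h0 : (1:ℕ) - 2 = 0 := by omega
    have h1 : (1:ℕ) - 1 = 0 := by omega
    have := hrec1 1 le_rfl 0 (by rw [h0, hF0]; omega)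
    rw [h1, hF0, hF1] at this
    simpa [hsF0, hsF1] using this
  have hS0 : S 0 = 1 := by
    show ∑ j ∈ Finset.range (F 0), sF j = 1
    rw [hF0]; simp [hsF0]
  have hS1 : S 1 = 3 := by
    show ∑ j ∈ Finset.range (F 1), sF j = 3
    rw [hF1, Finset.sum_range_succ, Finset.sum_range_one, hsF0, hsF1]
  have hS2 : S 2 = 6 := by
    show ∑ j ∈ Finset.range (F 2), sF j = 6
    rw [hF 0, hF1, hF0]
    rw [show (2:ℕ)+1 = 3 from rfl, Finset.sum_range_succ, Finset.sum_range_succ,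
      Finset.sum_range_one, hsF0, hsF1, hs2]
  -- S agrees with B
  have hSB : ∀ m, (S m : ℤ) = B m ∧ (S (m+1) : ℤ) = B (m+1) ∧ (S (m+2) : ℤ) = B (m+2) := by
    intro m
    induction m with
    | zero =>
      refine ⟨by rw [hS0, hB0]; norm_num, by rw [hS1, hB1]; norm_num,
        by rw [hS2, hB2]; norm_num⟩
    | succ n ih =>
      obtain ⟨i0, i1, i2⟩ := ih
      refine ⟨i1, i2, ?_⟩
      have h := hstep n
      have h' : (S (n+3) : ℤ) + S n = 2 * S (n+2) + S (n+1) := by exact_mod_cast h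
      rw [hBrec n]
      linarith
  -- main argument
  intro ℓ hℓ r hr
  obtain ⟨m, rfl⟩ : ∃ m, ℓ = m + 2 := ⟨ℓ - 2, by omega⟩
  have h2 : m + 2 - 2 = m := by omega
  have h1 : m + 2 - 1 = m + 1 := by omega
  rw [h2] at hr
  rw [h1]
  set P := ∑ i ∈ Finset.range (r+1), sF (F (m+1) + i) with hP
  have k1 : AF (F (m+2) + r) = S (m+2) + (P + AF r) := by
    rw [hAF, hAF]
    have hx : F (m+2) + r + 1 = F (m+2) + (r+1) := by omega
    rw [hx, hsum_split]
    congr 1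
    rw [hP, ← Finset.sum_add_distrib]
    exact Finset.sum_congr rfl fun i hi => hrec1' m i
      (by have := Finset.mem_range.mp hi; omega)
  have k2 : AF (F (m+1) + r) = S (m+1) + P := by
    rw [hAF]
    have hx : F (m+1) + r + 1 = F (m+1) + (r+1) := by omega
    rw [hx, hsum_split]
  obtain ⟨_, b1, b2⟩ := hSB m
  rw [k1, k2]
  push_cast
  linarith
end

section
/- For all ℓ ≥ 2 and all r with F(ℓ-2) ≤ r < F(ℓ-1), A_F(F(ℓ)+r) = 2B(ℓ) - B(ℓ-1) - B(ℓ-2) + 2·A_F(r). -/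
theorem AF_rec_second (F : ℕ → ℕ)
    (hF0 : F 0 = 1) (hF1 : F 1 = 2) (hF : ∀ n, F (n + 2) = F (n + 1) + F n)
    (sF : ℕ → ℕ) (hsF0 : sF 0 = 1) (hsF1 : sF 1 = 2)
    (hrec1 : ∀ ℓ, 1 ≤ ℓ → ∀ r, r < F (ℓ - 2) →
      sF (F ℓ + r) = sF (F (ℓ - 1) + r) + sF r)
    (hrec2 : ∀ ℓ, 1 ≤ ℓ → ∀ r, F (ℓ - 2) ≤ r → r < F (ℓ - 1) →
      sF (F ℓ + r) = 2 * sF r)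
    (AF : ℕ → ℕ) (hAF : ∀ n, AF n = ∑ j ∈ Finset.range (n + 1), sF j)
    (B : ℕ → ℤ) (hB0 : B 0 = 1) (hB1 : B 1 = 3) (hB2 : B 2 = 6)
    (hBrec : ∀ n, B (n + 3) = 2 * B (n + 2) + B (n + 1) - B n) :
    ∀ ℓ, 2 ≤ ℓ → ∀ r, F (ℓ - 2) ≤ r → r < F (ℓ - 1) →
      (AF (F ℓ + r) : ℤ) = 2 * B ℓ - B (ℓ - 1) - B (ℓ - 2) + 2 * AF r := by
  -- positivity and monotonicity of F
  have hpos : ∀ n, 1 ≤ F n := by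
    intro n
    induction n using Nat.strong_induction_on with
    | _ n ih =>
      match n with
      | 0 => omega
      | 1 => omega
      | (k+2) => have := ih k (by omega); rw [hF]; omega
  have hlt : ∀ n, F n < F (n + 1) := by
    intro n
    match n with
    | 0 => show F 0 < F 1; omega
    | (k+1) =>
      have := hpos k
      have h : F (k + 1 + 1) = F (k + 1) + F k := hF k
      omega
  -- AF at (m - 1) as a sum over range m
  have hAF' : ∀ m, 1 ≤ m → AF (m - 1) = ∑ j ∈ Finset.range m, sF j := by
    intro m hm
    rw [hAF, Nat.sub_add_cancel hm]
  -- Key identity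
  have hkey : ∀ ℓ, 2 ≤ ℓ → ∀ r, F (ℓ - 2) ≤ r → r < F (ℓ - 1) →
      (AF (F ℓ + r) : ℤ) = 2 * AF (F ℓ - 1) - AF (F (ℓ - 1) - 1)
        - AF (F (ℓ - 2) - 1) + 2 * AF r := by
    intro ℓ hℓ r h1 h2
    obtain ⟨m, rfl⟩ : ∃ m, ℓ = m + 2 := ⟨ℓ - 2, by omega⟩
    simp only [show m + 2 - 1 = m + 1 from rfl, show m + 2 - 2 = m from rfl] at *
    -- split the big sum
    have hsum1 : AF (F (m + 2) + r)
        = ∑ j ∈ Finset.range (F (m + 2)), sF j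
          + ∑ k ∈ Finset.range (r + 1), sF (F (m + 2) + k) := by
      rw [hAF, show F (m + 2) + r + 1 = F (m + 2) + (r + 1) from rfl,
        Finset.sum_range_add]
    -- split the second sum at F m
    have hsum2 : ∑ k ∈ Finset.range (r + 1), sF (F (m + 2) + k)
        = ∑ k ∈ Finset.range (F m), sF (F (m + 2) + k)
          + ∑ k ∈ Finset.Ico (F m) (r + 1), sF (F (m + 2) + k) := by
      rw [Finset.range_eq_Ico, Finset.range_eq_Ico]
      exact (Finset.sum_Ico_consecutive _ (Nat.zero_le _) (by omega)).symm
    -- first part via hrec1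
    have hsum3 : ∑ k ∈ Finset.range (F m), sF (F (m + 2) + k)
        = ∑ k ∈ Finset.range (F m), sF (F (m + 1) + k)
          + ∑ k ∈ Finset.range (F m), sF k := by
      rw [← Finset.sum_add_distrib]
      refine Finset.sum_congr rfl ?_
      intro k hk
      exact hrec1 (m + 2) (by omega) k (Finset.mem_range.mp hk)
    -- combine with the range (F (m+1)) sum
    have hsum4 : ∑ j ∈ Finset.range (F (m + 2)), sF j
        = ∑ j ∈ Finset.range (F (m + 1)), sF j
          + ∑ k ∈ Finset.range (F m), sF (F (m + 1) + k) := by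
      rw [hF m, Finset.sum_range_add]
    -- second part via hrec2
    have hsum5 : ∑ k ∈ Finset.Ico (F m) (r + 1), sF (F (m + 2) + k)
        = 2 * ∑ k ∈ Finset.Ico (F m) (r + 1), sF k := by
      rw [Finset.mul_sum]
      refine Finset.sum_congr rfl ?_
      intro k hk
      have hk' := Finset.mem_Ico.mp hk
      exact hrec2 (m + 2) (by omega) k hk'.1 (show k < F (m + 1) by omega)
    -- AF r split
    have hAFr : AF r = ∑ j ∈ Finset.range (F m), sF j
        + ∑ k ∈ Finset.Ico (F m) (r + 1), sF k := by
      rw [hAF, Finset.range_eq_Ico, Finset.range_eq_Ico]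
      exact (Finset.sum_Ico_consecutive _ (Nat.zero_le _) (by omega)).symm
    have ha := hAF' (F (m + 2)) (hpos _)
    have hb := hAF' (F (m + 1)) (hpos _)
    have hc := hAF' (F m) (hpos _)
    have key_nat : AF (F (m + 2) + r) + AF (F (m + 1) - 1)
        = 2 * AF (F (m + 2) - 1) + AF (F m - 1)
          + 2 * ∑ k ∈ Finset.Ico (F m) (r + 1), sF k := by
      rw [ha, hb, hc, hsum1, hsum2, hsum3, hsum5, hsum4]
      ring
    omega
  -- AF (F n - 1) = B n
  have hsF2 : sF 2 = 3 := by
    have := hrec1 1 (by omega) 0 (by simp [hF0])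
    simp [hF0, hF1, hsF0, hsF1] at this
    omega
  have hG : ∀ n, (AF (F n - 1) : ℤ) = B n := by
    intro n
    induction n using Nat.strong_induction_on with
    | _ n ih =>
      match n with
      | 0 =>
        rw [hF0, hB0]
        simp [hAF, hsF0]
      | 1 =>
        rw [hF1, hB1, hAF]
        simp [Finset.sum_range_succ, hsF0, hsF1]
      | 2 =>
        rw [show F 2 = 3 by rw [hF 0, hF0, hF1], hB2, hAF]
        simp [Finset.sum_range_succ, hsF0, hsF1, hsF2]
      | (k+3) =>
        have h1 : F k ≤ F (k + 1) - 1 := by have := hlt k; omega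
        have h2 : F (k + 1) - 1 < F (k + 1) := by have := hpos (k + 1); omega
        have h3 := hkey (k + 2) (by omega) (F (k + 1) - 1) h1 h2
        simp only [show k + 2 - 1 = k + 1 from rfl,
          show k + 2 - 2 = k from rfl] at h3
        have h4 : F (k + 2) + (F (k + 1) - 1) = F (k + 3) - 1 := by
          have := hpos (k + 1)
          have h5 : F (k + 3) = F (k + 2) + F (k + 1) := hF (k + 1)
          omega
        rw [h4] at h3
        rw [h3, hBrec k, ih (k + 2) (by omega), ih (k + 1) (by omega),
          ih k (by omega)]
        ring
  intro ℓ hℓ r h1 h2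
  rw [hkey ℓ hℓ r h1 h2, hG ℓ, hG (ℓ - 1), hG (ℓ - 2)]
end

section
/- Let β be the root of maximal modulus of X³ - 2X² - X + 1, and let g be defined by g(0)=2, g(1)=-1, g(2)=3 and g(n)=2g(n-2) for n ≥ 3. Then the series Σ_{i=0}^{∞} g(i)/β^i converges and equals β. -/
set_option maxHeartbeats 800000 in
theorem g_series_eq_beta (β : ℝ)
    (hβroot : β ^ 3 - 2 * β ^ 2 - β + 1 = 0)
    (hβmax : ∀ x : ℝ, x ^ 3 - 2 * x ^ 2 - x + 1 = 0 → x ≤ β)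
    (g : ℕ → ℤ)
    (hg0 : g 0 = 2) (hg1 : g 1 = -1) (hg2 : g 2 = 3)
    (hgrec : ∀ n, 3 ≤ n → g n = 2 * g (n - 2)) :
    HasSum (fun i : ℕ => (g i : ℝ) / β ^ i) β := by
  -- β ≥ 2 via IVT on [2,3]
  have hβ2 : (2:ℝ) ≤ β := by
    have hcont : ContinuousOn (fun x : ℝ => x ^ 3 - 2 * x ^ 2 - x + 1) (Set.Icc 2 3) := by
      fun_prop
    have h := intermediate_value_Icc (by norm_num : (2:ℝ) ≤ 3) hcont
    have h0 : (0:ℝ) ∈ Set.Icc ((fun x : ℝ => x ^ 3 - 2 * x ^ 2 - x + 1) 2)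
        ((fun x : ℝ => x ^ 3 - 2 * x ^ 2 - x + 1) 3) := by
      norm_num
    obtain ⟨x, hx, hfx⟩ := h h0
    have := hβmax x hfx
    linarith [hx.1]
  have hβpos : (0:ℝ) < β := by linarith
  have hβne : β ≠ 0 := ne_of_gt hβpos
  set q : ℝ := 2 / β ^ 2 with hq
  have hq0 : 0 ≤ q := by positivity
  have hq1 : q < 1 := by
    rw [hq, div_lt_one (by positivity)]
    nlinarith
  have hqsum : HasSum (fun k : ℕ => q ^ k) (1 - q)⁻¹ :=
    hasSum_geometric_of_lt_one hq0 hq1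
  have h1q : (1 : ℝ) - q ≠ 0 := by
    have : q < 1 := hq1; linarith
  -- closed forms for g
  have godd : ∀ k : ℕ, g (2 * k + 1) = -(2 ^ k) := by
    intro k
    induction k with
    | zero => simpa using hg1
    | succ n ih =>
      have h3 : 3 ≤ 2 * (n + 1) + 1 := by omega
      have := hgrec (2 * (n + 1) + 1) h3
      have heq : 2 * (n + 1) + 1 - 2 = 2 * n + 1 := by omega
      rw [heq] at this
      rw [this, ih]; ring
  have geven : ∀ k : ℕ, 1 ≤ k → g (2 * k) = 3 * 2 ^ (k - 1) := by
    intro k hk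
    induction k with
    | zero => omega
    | succ n ih =>
      rcases Nat.eq_or_lt_of_le hk with h | h
      · simp [← h, hg2]
      · have hn1 : 1 ≤ n := by omega
        have h3 : 3 ≤ 2 * (n + 1) := by omega
        have := hgrec (2 * (n + 1)) h3
        have heq : 2 * (n + 1) - 2 = 2 * n := by omega
        rw [heq] at this
        rw [this, ih hn1]
        have : n + 1 - 1 = (n - 1) + 1 := by omega
        rw [this, pow_succ]; ring
  -- even part
  have heven : HasSum (fun k : ℕ => (g (2 * k) : ℝ) / β ^ (2 * k))
      ((3 / 2) * (1 - q)⁻¹ + 1 / 2) := by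
    have h1 : HasSum (fun k : ℕ => (3 / 2) * q ^ k + (if k = 0 then (1:ℝ)/2 else 0))
        ((3 / 2) * (1 - q)⁻¹ + 1 / 2) :=
      (hqsum.mul_left (3 / 2)).add (hasSum_ite_eq 0 (1/2))
    convert h1 using 1
    · funext k
      rcases Nat.eq_zero_or_pos k with hk | hk
      · subst hk; simp [hg0]; norm_num
      · have := geven k hk
        rw [this]
        simp only [if_neg (Nat.pos_iff_ne_zero.mp hk)]
        push_cast
        rw [hq, div_pow]
        have hk1 : k - 1 + 1 = k := by omega
        have : (2:ℝ) ^ k = 2 * 2 ^ (k - 1) := by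
          rw [← pow_succ']; rw [hk1]
        rw [pow_mul]
        field_simp
        rw [this]; ring
  -- odd part
  have hodd : HasSum (fun k : ℕ => (g (2 * k + 1) : ℝ) / β ^ (2 * k + 1))
      (-(1 / β) * (1 - q)⁻¹) := by
    have h1 : HasSum (fun k : ℕ => (-(1/β)) * q ^ k) ((-(1/β)) * (1 - q)⁻¹) :=
      hqsum.mul_left _
    convert h1 using 1
    funext k
    rw [godd k]
    push_cast
    rw [hq, div_pow, pow_succ, pow_mul]
    field_simp
  have htot : HasSum (fun i : ℕ => (g i : ℝ) / β ^ i)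
      (((3 / 2) * (1 - q)⁻¹ + 1 / 2) + (-(1 / β) * (1 - q)⁻¹)) :=
    HasSum.even_add_odd heven hodd
  have hβ2ne : β ^ 2 - 2 ≠ 0 := by nlinarith
  have hval : ((3 / 2) * (1 - q)⁻¹ + 1 / 2) + (-(1 / β) * (1 - q)⁻¹) = β := by
    rw [hq]
    have h1q' : (1 : ℝ) - 2 / β ^ 2 = (β ^ 2 - 2) / β ^ 2 := by field_simp
    rw [h1q', inv_div]
    field_simp
    nlinarith [hβroot]
  rw [hval] at htot
  exact htot
end
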